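/- For integers 0 < k < n, a real number α with 0 < α < k/n, and any ε with 0 < ε < 1/3, the integral ∫₀^{1/2} (-log(t² + ε))^{nα - k - 1} · t^{2k+1} / (t² + ε)^{k+1} dt is bounded above by 2^{nα - k - 1/2} · ∫₀^{5/6} (-log t)^{nα - k - 1} / t dt, which is finite. -/

import Mathlib

open MeasureTheory Set

theorem aux_lintegral_image {s : Set ℝ} {f f' : ℝ → ℝ} (hs : MeasurableSet s)
    (hf' : ∀ x ∈ s, HasDerivWithinAt f (f' x) s x) (hf : InjOn f s) (g : ℝ → ENNReal) :
    ∫⁻ x in f '' s, g x = ∫⁻ x in s, ENNReal.ofReal |f' x| * g (f x) := by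
  simpa only [ContinuousLinearMap.det_toSpanSingleton] using
    lintegral_image_eq_lintegral_abs_det_fderiv_mul volume hs
      (fun x hx => (hf' x hx).hasFDerivWithinAt) hf g

theorem stmt0 (n k : ℕ) (hk : 0 < k) (hkn : k < n) (α : ℝ) (hα0 : 0 < α)
    (hα : α < (k : ℝ) / n) (ε : ℝ) (hε0 : 0 < ε) (hε : ε < 1/3) :
    (∫⁻ t in Ioo (0:ℝ) (1/2),
        ENNReal.ofReal ((-Real.log (t^2 + ε)) ^ ((n : ℝ) * α - k - 1) * t ^ (2*k+1)
          / (t^2 + ε) ^ (k+1)))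
      ≤ ENNReal.ofReal ((2:ℝ) ^ ((n : ℝ) * α - k - 1/2)) *
        ∫⁻ t in Ioo (0:ℝ) (5/6), ENNReal.ofReal ((-Real.log t) ^ ((n : ℝ) * α - k - 1) / t) ∧
    (∫⁻ t in Ioo (0:ℝ) (5/6), ENNReal.ofReal ((-Real.log t) ^ ((n : ℝ) * α - k - 1) / t)) < ⊤ := by
  have hn : (0:ℝ) < n := by exact_mod_cast hk.trans hkn
  set β : ℝ := (n : ℝ) * α - k - 1 with hβdef
  have hnαk : (n : ℝ) * α < k := by
    have := (lt_div_iff₀ hn).mp hα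
    linarith
  have hβ : β < -1 := by simp only [hβdef]; linarith
  -- the target integral
  set J : ENNReal := ∫⁻ t in Ioo (0:ℝ) (5/6), ENNReal.ofReal ((-Real.log t) ^ β / t) with hJ
  -- Part 2: finiteness of J
  have hJtop : J < ⊤ := by
    set ψ : ℝ → ℝ := fun t => -Real.log t with hψ
    set ψ' : ℝ → ℝ := fun t => -t⁻¹ with hψ'
    have hderiv : ∀ t ∈ Ioo (0:ℝ) (5/6), HasDerivWithinAt ψ (ψ' t) (Ioo (0:ℝ) (5/6)) t := by
      intro t ht
      exact ((Real.hasDerivAt_log (ne_of_gt ht.1)).neg).hasDerivWithinAt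
    have hinj : InjOn ψ (Ioo (0:ℝ) (5/6)) := by
      intro a ha b hb h
      exact Real.log_injOn_pos (mem_Ioi.2 ha.1) (mem_Ioi.2 hb.1) (neg_injective h)
    have hrw : J = ∫⁻ t in Ioo (0:ℝ) (5/6),
        ENNReal.ofReal |ψ' t| * ENNReal.ofReal ((ψ t) ^ β) := by
      rw [hJ]
      refine setLIntegral_congr_fun measurableSet_Ioo ?_
      intro t ht
      have ht0 : (0:ℝ) < t := ht.1
      have : |ψ' t| = t⁻¹ := by
        simp only [hψ', abs_neg, abs_inv, abs_of_pos ht0]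
      beta_reduce
      rw [this, ← ENNReal.ofReal_mul (by positivity), div_eq_inv_mul, mul_comm]
    have himg := aux_lintegral_image measurableSet_Ioo hderiv hinj
        (fun u => ENNReal.ofReal (u ^ β))
    have hsub : ψ '' Ioo (0:ℝ) (5/6) ⊆ Ioi (-Real.log (5/6)) := by
      rintro _ ⟨t, ht, rfl⟩
      have := Real.log_lt_log ht.1 ht.2
      simpa [hψ] using by linarith
    have ha : (0:ℝ) < -Real.log (5/6) := by
      have : Real.log (5/6) < 0 := Real.log_neg (by norm_num) (by norm_num)
      linarith
    calc J = ∫⁻ u in ψ '' Ioo (0:ℝ) (5/6), ENNReal.ofReal (u ^ β) := by rw [hrw, himg]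
      _ ≤ ∫⁻ u in Ioi (-Real.log (5/6)), ENNReal.ofReal (u ^ β) := lintegral_mono_set hsub
      _ < ⊤ := (integrableOn_Ioi_rpow_of_lt hβ ha).setLIntegral_lt_top
  refine ⟨?_, hJtop⟩
  -- Part 1
  set φ : ℝ → ℝ := fun t => Real.sqrt (t^2 + ε) with hφ
  set φ' : ℝ → ℝ := fun t => t / Real.sqrt (t^2 + ε) with hφ'
  have hspos : ∀ t : ℝ, (0:ℝ) < t^2 + ε := fun t => by positivity
  have hderiv : ∀ t ∈ Ioo (0:ℝ) (1/2), HasDerivWithinAt φ (φ' t) (Ioo (0:ℝ) (1/2)) t := by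
    intro t ht
    have h1 : HasDerivAt (fun t : ℝ => t^2 + ε) (2*t) t := by
      simpa using (hasDerivAt_pow 2 t).add_const ε
    have h2 := (Real.hasDerivAt_sqrt (ne_of_gt (hspos t))).comp t h1
    have heq : 1 / (2 * Real.sqrt (t^2 + ε)) * (2*t) = φ' t := by
      rw [hφ']
      have : Real.sqrt (t^2 + ε) ≠ 0 := ne_of_gt (Real.sqrt_pos.2 (hspos t))
      field_simp
    rw [heq] at h2
    exact h2.hasDerivWithinAt
  have hmono : StrictMonoOn φ (Ioo (0:ℝ) (1/2)) := by
    intro a ha b hb hab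
    apply Real.sqrt_lt_sqrt (by positivity)
    nlinarith [ha.1]
  have hinj : InjOn φ (Ioo (0:ℝ) (1/2)) := hmono.injOn
  have step1 : (∫⁻ t in Ioo (0:ℝ) (1/2),
        ENNReal.ofReal ((-Real.log (t^2 + ε)) ^ β * t ^ (2*k+1) / (t^2 + ε) ^ (k+1)))
      ≤ ∫⁻ t in Ioo (0:ℝ) (1/2),
        ENNReal.ofReal |φ' t| * ENNReal.ofReal ((2:ℝ) ^ β * ((-Real.log (φ t)) ^ β / φ t)) := by
    refine setLIntegral_mono' measurableSet_Ioo ?_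
    intro t ht
    have ht0 : (0:ℝ) < t := ht.1
    have ht2 : t < 1/2 := ht.2
    have hs0 : (0:ℝ) < t^2 + ε := hspos t
    have hs1 : t^2 + ε < 1 := by nlinarith
    have hsq : (0:ℝ) < Real.sqrt (t^2 + ε) := Real.sqrt_pos.2 hs0
    have hlogs : (0:ℝ) < -Real.log (t^2 + ε) := by
      have := Real.log_neg hs0 hs1
      linarith
    rw [← ENNReal.ofReal_mul (abs_nonneg _)]
    apply ENNReal.ofReal_le_ofReal
    have habs : |φ' t| = t / Real.sqrt (t^2 + ε) := by
      rw [hφ']; exact abs_of_pos (by positivity)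
    have hlogφ : -Real.log (φ t) = (-Real.log (t^2 + ε)) / 2 := by
      rw [hφ]; rw [Real.log_sqrt hs0.le]; ring
    have hφt : φ t = Real.sqrt (t^2 + ε) := rfl
    have hdiv : ((-Real.log (t^2 + ε)) / 2) ^ β
        = (-Real.log (t^2 + ε)) ^ β / (2:ℝ) ^ β := Real.div_rpow hlogs.le (by norm_num) β
    have h2ne : ((2:ℝ)) ^ β ≠ 0 := (Real.rpow_pos_of_pos two_pos β).ne'
    have hSne : Real.sqrt (t^2 + ε) ≠ 0 := hsq.ne'
    have hS2 : Real.sqrt (t^2 + ε) * Real.sqrt (t^2 + ε) = t^2 + ε :=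
      Real.mul_self_sqrt hs0.le
    have hRHS : |φ' t| * ((2:ℝ) ^ β * ((-Real.log (φ t)) ^ β / φ t))
        = (-Real.log (t^2 + ε)) ^ β * (t / (t^2 + ε)) := by
      rw [habs, hlogφ, hφt, hdiv]
      rw [← hS2]
      field_simp
      rw [Real.sq_sqrt (sq_nonneg _)]
    rw [hRHS]
    have hkey : t ^ (2*k+1) / (t^2 + ε) ^ (k+1) ≤ t / (t^2 + ε) := by
      rw [div_le_div_iff₀ (by positivity) (by positivity)]
      have e1 : t ^ (2*k+1) = (t^2) ^ k * t := by rw [pow_succ, pow_mul]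
      have e2 : (t^2 + ε) ^ (k+1) = (t^2 + ε) ^ k * (t^2 + ε) := by rw [pow_succ]
      rw [e1, e2]
      have hp : (t^2) ^ k ≤ (t^2 + ε) ^ k :=
        pow_le_pow_left₀ (sq_nonneg t) (by linarith) k
      calc (t^2) ^ k * t * (t^2 + ε) ≤ (t^2 + ε) ^ k * t * (t^2 + ε) := by
            apply mul_le_mul_of_nonneg_right (mul_le_mul_of_nonneg_right hp ht0.le) hs0.le
        _ = t * ((t^2 + ε) ^ k * (t^2 + ε)) := by ring
    calc (-Real.log (t^2 + ε)) ^ β * t ^ (2*k+1) / (t^2 + ε) ^ (k+1)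
        = (-Real.log (t^2 + ε)) ^ β * (t ^ (2*k+1) / (t^2 + ε) ^ (k+1)) := by
          rw [mul_div_assoc]
      _ ≤ (-Real.log (t^2 + ε)) ^ β * (t / (t^2 + ε)) := by
          apply mul_le_mul_of_nonneg_left hkey (Real.rpow_nonneg hlogs.le β)
  have himg := aux_lintegral_image measurableSet_Ioo hderiv hinj
      (fun u => ENNReal.ofReal ((2:ℝ) ^ β * ((-Real.log u) ^ β / u)))
  have hsub : φ '' Ioo (0:ℝ) (1/2) ⊆ Ioo (0:ℝ) (5/6) := by
    rintro _ ⟨t, ht, rfl⟩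
    refine ⟨Real.sqrt_pos.2 (hspos t), ?_⟩
    rw [show (5/6 : ℝ) = Real.sqrt ((5/6)^2) by rw [Real.sqrt_sq (by norm_num)]]
    apply Real.sqrt_lt_sqrt (by positivity)
    nlinarith [ht.1, ht.2]
  have step3 : (∫⁻ u in Ioo (0:ℝ) (5/6),
      ENNReal.ofReal ((2:ℝ) ^ β * ((-Real.log u) ^ β / u)))
      = ENNReal.ofReal ((2:ℝ) ^ β) * J := by
    rw [hJ]
    simp_rw [ENNReal.ofReal_mul (Real.rpow_pos_of_pos two_pos β).le]
    rw [lintegral_const_mul' _ _ ENNReal.ofReal_ne_top]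
  have hconst : ENNReal.ofReal ((2:ℝ) ^ β) ≤ ENNReal.ofReal ((2:ℝ) ^ ((n : ℝ) * α - k - 1/2)) := by
    apply ENNReal.ofReal_le_ofReal
    apply Real.rpow_le_rpow_of_exponent_le (by norm_num)
    rw [hβdef]; linarith
  calc (∫⁻ t in Ioo (0:ℝ) (1/2),
        ENNReal.ofReal ((-Real.log (t^2 + ε)) ^ β * t ^ (2*k+1) / (t^2 + ε) ^ (k+1)))
      ≤ ∫⁻ t in Ioo (0:ℝ) (1/2),
        ENNReal.ofReal |φ' t| * ENNReal.ofReal ((2:ℝ) ^ β * ((-Real.log (φ t)) ^ β / φ t)) := step1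
    _ = ∫⁻ u in φ '' Ioo (0:ℝ) (1/2),
        ENNReal.ofReal ((2:ℝ) ^ β * ((-Real.log u) ^ β / u)) := himg.symm
    _ ≤ ∫⁻ u in Ioo (0:ℝ) (5/6),
        ENNReal.ofReal ((2:ℝ) ^ β * ((-Real.log u) ^ β / u)) := lintegral_mono_set hsub
    _ = ENNReal.ofReal ((2:ℝ) ^ β) * J := step3
    _ ≤ ENNReal.ofReal ((2:ℝ) ^ ((n : ℝ) * α - k - 1/2)) * J :=
        mul_le_mul_left hconst J
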